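/- The number of integer vectors (e1,e2,e3,e4) with e1+e2+e3+e4 = 0 and sum of positive entries at most l' is at most (10/3)l'^3 + 5l'^2 + (11/3)l' + 1. -/

import Mathlib

section CountLimitedMagnitudeAux

lemma auxIccInsert (m : ℕ) : Finset.Icc (0:ℤ) ((m:ℤ)+1) = insert ((m:ℤ)+1) (Finset.Icc (0:ℤ) (m:ℤ)) := by
  ext x; simp [Finset.mem_Icc]; omega

noncomputable section
def tS (n : ℤ) : ℤ := ∑ x ∈ Finset.Icc (0:ℤ) n, x
def sqS (n : ℤ) : ℤ := ∑ x ∈ Finset.Icc (0:ℤ) n, x * x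
def ttS (n : ℤ) : ℤ := ∑ c ∈ Finset.Icc (0:ℤ) n, tS c
def hZ (L c : ℤ) : ℤ := (2*L + 1 - max c 0 - max (-c) 0) * (2*L + 1 - max c 0 - max (-c) 0)
      - tS (L - max c 0) - tS (L - max (-c) 0)
end

lemma tS_nat : ∀ m : ℕ, 2 * tS (m:ℤ) = (m:ℤ) * ((m:ℤ)+1)
  | 0 => by simp [tS]
  | (k+1) => by
    have h := tS_nat k
    unfold tS at *
    push_cast
    rw [auxIccInsert k, Finset.sum_insert (by simp [Finset.mem_Icc])]
    ring_nf
    ring_nf at h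
    linarith

lemma sqS_nat : ∀ m : ℕ, 6 * sqS (m:ℤ) = (m:ℤ) * ((m:ℤ)+1) * (2*(m:ℤ)+1)
  | 0 => by simp [sqS]
  | (k+1) => by
    have h := sqS_nat k
    unfold sqS at *
    push_cast
    rw [auxIccInsert k, Finset.sum_insert (by simp [Finset.mem_Icc])]
    ring_nf
    ring_nf at h
    linarith

lemma ttS_nat : ∀ m : ℕ, 6 * ttS (m:ℤ) = (m:ℤ) * ((m:ℤ)+1) * ((m:ℤ)+2)
  | 0 => by simp [ttS, tS]
  | (k+1) => by
    have h := ttS_nat k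
    have h2 := tS_nat (k+1)
    unfold ttS at *
    push_cast
    rw [auxIccInsert k, Finset.sum_insert (by simp [Finset.mem_Icc])]
    push_cast at h2
    ring_nf
    ring_nf at h h2
    linarith

lemma sum_max_pos (lo hi : ℤ) (hlo : lo ≤ 0) (hhi : 0 ≤ hi) :
    ∑ b ∈ Finset.Icc lo hi, max b 0 = tS hi := by
  rw [show Finset.Icc lo hi = Finset.Icc lo (-1) ∪ Finset.Icc 0 hi by ext x; simp [Finset.mem_Icc]; omega,
    Finset.sum_union (by rw [Finset.disjoint_left]; intro a ha hb; simp [Finset.mem_Icc] at ha hb; omega)]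
  rw [Finset.sum_eq_zero (fun x hx => by simp [Finset.mem_Icc] at hx; omega), zero_add, tS]
  exact Finset.sum_congr rfl (fun x hx => by simp [Finset.mem_Icc] at hx; omega)

lemma sum_max_neg (lo hi : ℤ) (hlo : lo ≤ 0) (hhi : 0 ≤ hi) :
    ∑ b ∈ Finset.Icc lo hi, max (-b) 0 = tS (-lo) := by
  rw [← sum_max_pos (-hi) (-lo) (by omega) (by omega)]
  exact Finset.sum_nbij' (fun b => -b) (fun b => -b)
    (fun a ha => by simp [Finset.mem_Icc] at *; omega)
    (fun a ha => by simp [Finset.mem_Icc] at *; omega)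
    (fun a _ => by ring) (fun a _ => by ring)
    (fun a _ => rfl)

noncomputable def T3f (L : ℤ) : Finset (ℤ × ℤ × ℤ) :=
  (Finset.Icc (-L) L ×ˢ Finset.Icc (-L) L ×ˢ Finset.Icc (-L) L).filter
    (fun v => -L ≤ v.1 + v.2.1 ∧ v.1 + v.2.1 ≤ L ∧ -L ≤ v.1 + v.2.2 ∧ v.1 + v.2.2 ≤ L ∧
      -L ≤ v.2.1 + v.2.2 ∧ v.2.1 + v.2.2 ≤ L ∧ -L ≤ v.1 + v.2.1 + v.2.2 ∧ v.1 + v.2.1 + v.2.2 ≤ L)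

lemma mem_T3f {L a b c : ℤ} : (a,b,c) ∈ T3f L ↔ (-L ≤ a ∧ a ≤ L ∧ -L ≤ b ∧ b ≤ L ∧ -L ≤ c ∧ c ≤ L ∧
    -L ≤ a+b ∧ a+b ≤ L ∧ -L ≤ a+c ∧ a+c ≤ L ∧ -L ≤ b+c ∧ b+c ≤ L ∧ -L ≤ a+b+c ∧ a+b+c ≤ L) := by
  simp [T3f, Finset.mem_filter, Finset.mem_product, Finset.mem_Icc]; tauto

lemma possum_eq (e : Fin 4 → ℤ) : (∑ j ∈ Finset.univ.filter (fun j => 0 < e j), e j) =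
    max (e 0) 0 + max (e 1) 0 + max (e 2) 0 + max (e 3) 0 := by
  rw [Finset.sum_filter, Fin.sum_univ_four]
  split_ifs <;> omega

lemma fwd_mem (l' : ℕ) (e : Fin 4 → ℤ) (h1 : ∑ j, e j = 0)
    (h2 : (∑ j ∈ Finset.univ.filter (fun j => 0 < e j), e j) ≤ (l' : ℤ)) :
    (e 0, e 1, e 2) ∈ T3f (l' : ℤ) := by
  rw [possum_eq] at h2
  rw [Fin.sum_univ_four] at h1
  rw [mem_T3f]
  omega

lemma bwd_mem (l' : ℕ) (a b c : ℤ) (hv : (a, b, c) ∈ T3f (l' : ℤ)) :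
    ∑ j, (![a, b, c, -(a + b + c)]) j = 0 ∧
    (∑ j ∈ Finset.univ.filter (fun j => 0 < (![a, b, c, -(a + b + c)]) j),
      (![a, b, c, -(a + b + c)]) j) ≤ (l' : ℤ) := by
  rw [mem_T3f] at hv
  refine ⟨by rw [Fin.sum_univ_four]; simp, ?_⟩
  rw [possum_eq]
  simp
  omega

noncomputable def eqvT (l' : ℕ) : {e : Fin 4 → ℤ // ∑ j, e j = 0 ∧
    (∑ j ∈ Finset.univ.filter (fun j => 0 < e j), e j) ≤ (l' : ℤ)} ≃ {v // v ∈ T3f (l' : ℤ)} where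
  toFun e := ⟨(e.1 0, e.1 1, e.1 2), fwd_mem l' e.1 e.2.1 e.2.2⟩
  invFun v := ⟨![v.1.1, v.1.2.1, v.1.2.2, -(v.1.1 + v.1.2.1 + v.1.2.2)],
    bwd_mem l' v.1.1 v.1.2.1 v.1.2.2 (by obtain ⟨⟨a,b,c⟩, hv⟩ := v; exact hv)⟩
  left_inv e := by
    obtain ⟨e, h1, h2⟩ := e
    rw [Fin.sum_univ_four] at h1
    apply Subtype.ext
    funext i
    fin_cases i <;> simp <;> omega
  right_inv v := by
    obtain ⟨⟨a,b,c⟩, hv⟩ := v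
    apply Subtype.ext
    simp

lemma cardBridge (l' : ℕ) : Nat.card {e : Fin 4 → ℤ // ∑ j, e j = 0 ∧
    (∑ j ∈ Finset.univ.filter (fun j => 0 < e j), e j) ≤ (l' : ℤ)} = (T3f (l' : ℤ)).card := by
  rw [Nat.card_congr (eqvT l'), Nat.card_eq_finsetCard]

def gf (L : ℤ) (w : ℤ × ℤ) : ℕ :=
  (2*L + 1 - max w.1 0 - max (-w.1) 0 - max w.2 0 - max (-w.2) 0).toNat

noncomputable def UL (L : ℤ) : Finset (ℤ × ℤ) :=
  (Finset.Icc (-L) L ×ˢ Finset.Icc (-L) L).filter (fun w => -L ≤ w.1 + w.2 ∧ w.1 + w.2 ≤ L)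

lemma mem_UL {L b c : ℤ} : (b,c) ∈ UL L ↔ (-L ≤ b ∧ b ≤ L ∧ -L ≤ c ∧ c ≤ L ∧ -L ≤ b+c ∧ b+c ≤ L) := by
  simp [UL, Finset.mem_filter, Finset.mem_product, Finset.mem_Icc]; tauto

lemma stepB (L : ℤ) : (T3f L).card = ∑ w ∈ UL L, gf L w := by
  rw [Finset.card_eq_sum_card_fiberwise (f := fun v => v.2) (t := UL L)
    (by rintro ⟨a, b, c⟩ hv; rw [Finset.mem_coe, mem_T3f] at hv; rw [Finset.mem_coe, mem_UL]; omega)]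
  refine Finset.sum_congr rfl ?_
  rintro ⟨b, c⟩ hw
  rw [mem_UL] at hw
  rw [Finset.card_nbij' (t := Finset.Icc (-L + max (-b) 0 + max (-c) 0) (L - max b 0 - max c 0))
    (fun v => v.1) (fun a => (a, b, c))
    (by rintro ⟨x, y, z⟩ hv
        rw [Finset.mem_coe, Finset.mem_filter] at hv
        obtain ⟨hv1, hv2⟩ := hv
        rw [mem_T3f] at hv1
        simp at hv2
        obtain ⟨rfl, rfl⟩ := hv2
        simp [Finset.mem_Icc]
        omega)
    (by intro a ha
        simp [Finset.mem_Icc] at ha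
        rw [Finset.mem_coe, Finset.mem_filter, mem_T3f]
        refine ⟨by omega, rfl⟩)
    (by rintro ⟨x, y, z⟩ hv
        rw [Finset.mem_coe, Finset.mem_filter] at hv
        obtain ⟨hv1, hv2⟩ := hv
        simp at hv2
        obtain ⟨rfl, rfl⟩ := hv2
        rfl)
    (by intro a ha; rfl)]
  rw [Int.card_Icc, gf]
  omega

lemma stepC (L : ℤ) : ∑ w ∈ UL L, gf L w =
    ∑ c ∈ Finset.Icc (-L) L, ∑ b ∈ Finset.Icc (-L + max (-c) 0) (L - max c 0), gf L (b, c) := by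
  rw [show UL L = (Finset.Icc (-L) L).biUnion (fun c =>
      (Finset.Icc (-L + max (-c) 0) (L - max c 0)).map ⟨fun b => (b, c), fun x y h => by simpa using h⟩) from ?_]
  · rw [Finset.sum_biUnion ?_]
    · exact Finset.sum_congr rfl (fun c _ => Finset.sum_map _ _ _)
    · intro c1 h1 c2 h2 hne
      simp only [Function.onFun, Finset.disjoint_left]
      rintro ⟨b, c⟩ hb hc
      simp only [Finset.mem_map, Function.Embedding.coeFn_mk, Prod.mk.injEq, DFunLike.coe] at hb hc
      obtain ⟨b1, _, _, rfl⟩ := hb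
      obtain ⟨b2, _, _, h⟩ := hc
      exact hne h.symm
  · ext ⟨b, c⟩
    rw [mem_UL]
    simp only [Finset.mem_biUnion, Finset.mem_map, Function.Embedding.coeFn_mk, Prod.mk.injEq, DFunLike.coe,
      Finset.mem_Icc]
    constructor
    · intro h
      exact ⟨c, by omega, b, by omega, rfl, rfl⟩
    · rintro ⟨c', hc', b', hb', rfl, rfl⟩
      omega

lemma stepD (L c : ℤ) (hc1 : -L ≤ c) (hc2 : c ≤ L) :
    ((∑ b ∈ Finset.Icc (-L + max (-c) 0) (L - max c 0), gf L (b, c) : ℕ) : ℤ) = hZ L c := by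
  simp only [hZ]
  set lo := -L + max (-c) 0 with hlodef
  set hi := L - max c 0 with hhidef
  have hlo : lo ≤ 0 := by omega
  have hhi : 0 ≤ hi := by omega
  rw [Nat.cast_sum]
  rw [Finset.sum_congr rfl (g := fun b => (2*L + 1 - max c 0 - max (-c) 0) - max b 0 - max (-b) 0)
    (fun b hb => by
      simp only [Finset.mem_Icc] at hb
      simp only [gf]
      rw [Int.toNat_of_nonneg (by omega)]
      ring)]
  rw [Finset.sum_sub_distrib, Finset.sum_sub_distrib, Finset.sum_const,
    sum_max_pos lo hi hlo hhi, sum_max_neg lo hi hlo hhi, Int.card_Icc]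
  have h1 : ((hi + 1 - lo).toNat : ℤ) = hi + 1 - lo := by omega
  rw [nsmul_eq_mul, h1]
  have h2 : hi + 1 - lo = 2*L + 1 - max c 0 - max (-c) 0 := by omega
  have h3 : -lo = L - max (-c) 0 := by omega
  rw [h2, h3]

lemma stepE (L : ℤ) (hL : 0 ≤ L) :
    ∑ c ∈ Finset.Icc (-L) L, hZ L c =
    2 * ((sqS (2*L+1) - sqS L) - ttS L - (L+1) * tS L) - ((2*L+1)*(2*L+1) - tS L - tS L) := by
  have hsplit : Finset.Icc (-L) L = Finset.Icc (-L) (-1) ∪ Finset.Icc 0 L := by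
    ext x; simp [Finset.mem_Icc]; omega
  rw [hsplit, Finset.sum_union (by rw [Finset.disjoint_left]; intro a ha hb; simp [Finset.mem_Icc] at ha hb; omega)]
  have hrefl : ∑ c ∈ Finset.Icc (-L) (-1), hZ L c = ∑ c ∈ Finset.Icc 1 L, hZ L c := by
    refine Finset.sum_nbij' (fun c => -c) (fun c => -c)
      (fun a ha => by simp [Finset.mem_Icc] at *; omega)
      (fun a ha => by simp [Finset.mem_Icc] at *; omega)
      (fun a _ => by ring) (fun a _ => by ring)
      (fun a _ => by simp only [hZ, neg_neg]; ring_nf)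
  have hins : Finset.Icc (0:ℤ) L = insert 0 (Finset.Icc 1 L) := by
    ext x; simp [Finset.mem_Icc]; omega
  have hmain : ∑ c ∈ Finset.Icc (0:ℤ) L, hZ L c =
      (sqS (2*L+1) - sqS L) - ttS L - (L+1) * tS L := by
    rw [Finset.sum_congr rfl (g := fun c => (2*L+1-c)*(2*L+1-c) - tS (L - c) - tS L)
      (fun c hc => by
        simp only [Finset.mem_Icc] at hc
        simp only [hZ]
        rw [show max c 0 = c by omega, show max (-c) 0 = 0 by omega, sub_zero, show L - (0:ℤ) = L by ring])]
    rw [Finset.sum_sub_distrib, Finset.sum_sub_distrib]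
    have e1 : ∑ c ∈ Finset.Icc (0:ℤ) L, (2*L+1-c)*(2*L+1-c) = sqS (2*L+1) - sqS L := by
      have hs : sqS (2*L+1) = sqS L + ∑ x ∈ Finset.Icc (L+1) (2*L+1), x * x := by
        rw [sqS, sqS, show Finset.Icc (0:ℤ) (2*L+1) = Finset.Icc (0:ℤ) L ∪ Finset.Icc (L+1) (2*L+1) by
          ext x; simp [Finset.mem_Icc]; omega,
          Finset.sum_union (by rw [Finset.disjoint_left]; intro a ha hb; simp [Finset.mem_Icc] at ha hb; omega)]
      have hb : ∑ c ∈ Finset.Icc (0:ℤ) L, (2*L+1-c)*(2*L+1-c) = ∑ x ∈ Finset.Icc (L+1) (2*L+1), x * x := by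
        refine Finset.sum_nbij' (fun c => 2*L+1-c) (fun x => 2*L+1-x)
          (fun a ha => by simp [Finset.mem_Icc] at *; omega)
          (fun a ha => by simp [Finset.mem_Icc] at *; omega)
          (fun a _ => by ring) (fun a _ => by ring)
          (fun a _ => by ring)
      omega
    have e2 : ∑ c ∈ Finset.Icc (0:ℤ) L, tS (L - c) = ttS L := by
      rw [ttS]
      refine Finset.sum_nbij' (fun c => L - c) (fun c => L - c)
        (fun a ha => by simp [Finset.mem_Icc] at *; omega)
        (fun a ha => by simp [Finset.mem_Icc] at *; omega)
        (fun a _ => by ring) (fun a _ => by ring)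
        (fun a _ => rfl)
    have e3 : ∑ _c ∈ Finset.Icc (0:ℤ) L, tS L = (L+1) * tS L := by
      rw [Finset.sum_const, Int.card_Icc, nsmul_eq_mul]
      congr 1
      omega
    rw [e1, e2, e3]
  have h0 : hZ L 0 = (2*L+1)*(2*L+1) - tS L - tS L := by
    simp only [hZ, neg_zero, max_self, sub_zero]
  have hS0 : ∑ c ∈ Finset.Icc (0:ℤ) L, hZ L c = hZ L 0 + ∑ c ∈ Finset.Icc 1 L, hZ L c := by
    rw [hins, Finset.sum_insert (by simp [Finset.mem_Icc])]
  rw [hrefl]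
  linarith [hmain, hS0, h0]

end CountLimitedMagnitudeAux

/-- The number of integer vectors (e1,e2,e3,e4) summing to 0 whose positive
entries sum to at most l' is at most (10/3)l'³ + 5l'² + (11/3)l' + 1
(stated multiplied by 3). -/
theorem count_limited_magnitude_errors_le (l' : ℕ) :
    3 * Nat.card {e : Fin 4 → ℤ // ∑ j, e j = 0 ∧
        (∑ j ∈ Finset.univ.filter (fun j => 0 < e j), e j) ≤ (l' : ℤ)}
      ≤ 10 * l' ^ 3 + 15 * l' ^ 2 + 11 * l' + 3 := by
  have hL : (0:ℤ) ≤ (l' : ℤ) := Int.natCast_nonneg l'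
  set L := (l' : ℤ) with hLdef
  have hcast : ((T3f L).card : ℤ) = ∑ c ∈ Finset.Icc (-L) L, hZ L c := by
    rw [stepB, stepC, Nat.cast_sum]
    refine Finset.sum_congr rfl (fun c hc => ?_)
    simp only [Finset.mem_Icc] at hc
    exact stepD L c hc.1 hc.2
  have C1 := tS_nat l'
  have C2 := sqS_nat l'
  have C3 := sqS_nat (2*l'+1)
  have C4 := ttS_nat l'
  push_cast at C1 C2 C3 C4
  have key : 6 * ((T3f L).card : ℤ) = 20*L^3 + 30*L^2 + 22*L + 6 := by
    rw [hcast, stepE L hL]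
    linear_combination 2*C3 - 2*C2 - 2*C4 - 6*L*C1
  have key3 : (3 * (T3f L).card : ℤ) = ((10*l'^3 + 15*l'^2 + 11*l'+3 : ℕ) : ℤ) := by
    push_cast
    linarith [key]
  rw [cardBridge l']
  exact le_of_eq (by exact_mod_cast key3)
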